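/- arXiv:1103.0498 — 3 statements merged into one kernel-verified Lean document; each statement's English description precedes it below -/
import Mathlib

section
/- If there exists a family of vectors (a_i)_{i=1,...,d} in ℝ^d and an index j < d such that f(x) = n(a_{j+1}ᵀx,...,a_dᵀx)·h(a_1ᵀx,...,a_jᵀx) for all x, where f is a probability density on ℝ^d, n is a probability density on ℝ^{d−j}, and h is a probability density on ℝ^j, then the family (a_1,...,a_d) is linearly independent, hence a basis of ℝ^d. -/
open MeasureTheory Set Matrix
open FourierTransform Filter

/-- An integrable function on `ℝ^d` invariant under translation by a nonzero vector has
zero integral. -/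
lemma integral_eq_zero_of_periodic_aux {d : ℕ} (g : (Fin d → ℝ) → ℝ)
    (hgint : Integrable g) (v : Fin d → ℝ) (hv : v ≠ 0)
    (hper : ∀ x, g (x + v) = g x) : ∫ x, g x = 0 := by
  set L : (Fin d → ℝ) →ₗ[ℝ] (Fin d → ℝ) →ₗ[ℝ] ℝ :=
    LinearMap.mk₂ ℝ (· ⬝ᵥ ·) (fun m m' n => add_dotProduct m m' n)
      (fun c m n => smul_dotProduct c m n) (fun m n n' => dotProduct_add m n n')
      (fun c m n => dotProduct_smul c m n) with hLdef
  have hL : Continuous fun p : (Fin d → ℝ) × (Fin d → ℝ) => L p.1 p.2 := by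
    simp only [hLdef, LinearMap.mk₂_apply, dotProduct]
    exact continuous_finset_sum _ fun i _ =>
      ((continuous_apply i).comp continuous_fst).mul ((continuous_apply i).comp continuous_snd)
  set gc : (Fin d → ℝ) → ℂ := fun x => (g x : ℂ) with hgc
  have hgcint : Integrable gc := hgint.ofReal
  set F : (Fin d → ℝ) → ℂ :=
    VectorFourier.fourierIntegral Real.fourierChar volume L gc with hF
  have hFcont : Continuous F :=
    VectorFourier.fourierIntegral_continuous Real.continuous_fourierChar hL hgcint
  -- translation identity
  have hcomp : (gc ∘ fun x => x + v) = gc := by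
    funext x; simp [hgc, hper x]
  have htrans : ∀ w, F w = Real.fourierChar (L v w) • F w := by
    intro w
    have := VectorFourier.fourierIntegral_comp_add_right Real.fourierChar
      (volume : Measure (Fin d → ℝ)) L gc v
    rw [hcomp] at this
    exact (congrFun this w).symm ▸ congrFun this w
  -- F vanishes where the character is ≠ 1
  have hvanish : ∀ w, (Real.fourierChar (L v w) : ℂ) ≠ 1 → F w = 0 := by
    intro w hne
    have h1 := htrans w
    rw [Circle.smul_def, smul_eq_mul] at h1
    have h2 : ((Real.fourierChar (L v w) : ℂ) - 1) * F w = 0 := by linear_combination -h1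
    rcases mul_eq_zero.1 h2 with h3 | h3
    · exact absurd (by linear_combination h3) hne
    · exact h3
  -- vector u with v ⬝ᵥ u = 1
  have hvv : v ⬝ᵥ v ≠ 0 := fun hc => hv ((dotProduct_self_eq_zero).1 hc)
  set u : Fin d → ℝ := (v ⬝ᵥ v)⁻¹ • v with hu
  have hvu : v ⬝ᵥ u = 1 := by
    rw [hu, dotProduct_smul, smul_eq_mul, inv_mul_cancel₀ hvv]
  -- for 0 < t < 1, F (t • u) = 0
  have hFt : ∀ t : ℝ, 0 < t → t < 1 → F (t • u) = 0 := by
    intro t ht0 ht1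
    apply hvanish
    have hLv : L v (t • u) = t := by
      simp [hLdef, dotProduct_smul, hvu]
    rw [hLv, Real.fourierChar_apply]
    intro hc
    rw [Complex.exp_eq_one_iff] at hc
    obtain ⟨k, hk⟩ := hc
    rw [show (k:ℂ) * (2 * (Real.pi:ℂ) * Complex.I) = ((k * (2 * Real.pi) : ℝ) : ℂ) * Complex.I
      by push_cast; ring] at hk
    have hk2 : (2 * Real.pi * t : ℝ) = k * (2 * Real.pi) := by
      exact_mod_cast mul_right_cancel₀ Complex.I_ne_zero hk
    have htk : t = (k : ℝ) := by
      have h2 : (2 * Real.pi) * t = (2 * Real.pi) * (k:ℝ) := by linear_combination hk2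
      exact mul_left_cancel₀ (by positivity) h2
    have hk0 : (0:ℝ) < (k:ℝ) := htk ▸ ht0
    have hk1 : (k:ℝ) < 1 := htk ▸ ht1
    have : (0:ℤ) < k := by exact_mod_cast hk0
    have : k < 1 := by exact_mod_cast hk1
    omega
  -- take limit t → 0
  have htend : Tendsto (fun n : ℕ => ((n:ℝ) + 2)⁻¹) atTop (nhds 0) :=
    tendsto_inv_atTop_zero.comp (tendsto_atTop_add_const_right _ 2 tendsto_natCast_atTop_atTop)
  have hwtend : Tendsto (fun n : ℕ => ((n:ℝ) + 2)⁻¹ • u) atTop (nhds 0) := by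
    simpa using htend.smul_const u
  have hFlim : Tendsto (fun n : ℕ => F (((n:ℝ) + 2)⁻¹ • u)) atTop (nhds (F 0)) :=
    (hFcont.continuousAt.tendsto).comp hwtend
  have hzero : ∀ n : ℕ, F (((n:ℝ) + 2)⁻¹ • u) = 0 := by
    intro n
    refine hFt _ (by positivity) ?_
    rw [inv_lt_one_iff₀]
    right; linarith [Nat.cast_nonneg (α := ℝ) n]
  have hF0 : F 0 = 0 := by
    have : Tendsto (fun n : ℕ => F (((n:ℝ) + 2)⁻¹ • u)) atTop (nhds 0) := by
      simp only [hzero]; exact tendsto_const_nhds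
    exact tendsto_nhds_unique hFlim this
  -- but F 0 = ∫ g
  have hF0' : F 0 = ((∫ x, g x : ℝ) : ℂ) := by
    rw [hF, VectorFourier.fourierIntegral]
    simp only [map_zero, neg_zero, AddChar.map_zero_eq_one, one_smul]
    exact integral_ofReal
  rw [hF0'] at hF0
  exact_mod_cast hF0

/-- If a probability density `f` on `ℝ^d` factorizes as
`f(x) = n(a_{j+1}ᵀx,…,a_dᵀx) · h(a_1ᵀx,…,a_jᵀx)` with `n`, `h` probability densities,
then the family `(a_1,…,a_d)` is linearly independent (hence a basis of `ℝ^d`). -/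
theorem factorized_density_family_linearIndependent
    (d j : ℕ) (hj : j < d)
    (a : Fin d → (Fin d → ℝ))
    (f : (Fin d → ℝ) → ℝ) (n : (Fin (d - j) → ℝ) → ℝ) (h : (Fin j → ℝ) → ℝ)
    (hfnonneg : ∀ x, 0 ≤ f x) (hnnonneg : ∀ y, 0 ≤ n y) (hhnonneg : ∀ z, 0 ≤ h z)
    (hfint : Integrable f) (hf1 : ∫ x, f x = 1)
    (hnint : Integrable n) (hn1 : ∫ y, n y = 1)
    (hhint : Integrable h) (hh1 : ∫ z, h z = 1)
    (hfact : ∀ x, f x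
      = n (fun i : Fin (d - j) => a ⟨j + i.1, by omega⟩ ⬝ᵥ x)
        * h (fun i : Fin j => a ⟨i.1, by omega⟩ ⬝ᵥ x)) :
    LinearIndependent ℝ a := by
  by_contra hli
  have hA : ¬ IsUnit (Matrix.of a) := fun hu => hli (linearIndependent_rows_iff_isUnit.2 hu)
  have hdet : (Matrix.of a).det = 0 := by
    by_contra hd
    exact hA ((Matrix.isUnit_iff_isUnit_det _).2 (isUnit_iff_ne_zero.2 hd))
  obtain ⟨v, hv0, hmv⟩ := (Matrix.exists_mulVec_eq_zero_iff).2 hdet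
  have hav : ∀ i, a i ⬝ᵥ v = 0 := fun i => congrFun hmv i
  have hper : ∀ x, f (x + v) = f x := by
    intro x
    rw [hfact, hfact]
    congr 1
    · congr 1; funext i; rw [dotProduct_add, hav, add_zero]
    · congr 1; funext i; rw [dotProduct_add, hav, add_zero]
  have := integral_eq_zero_of_periodic_aux f hfint v hv0 hper
  rw [hf1] at this
  exact one_ne_zero this
end

section
/- Uniqueness part of Sklar's theorem for densities: if F is a joint CDF on ℝ^d with continuous marginal CDFs F_1,...,F_d, then there is a unique copula C with F(x) = C(F_1(x_1),...,F_d(x_d)) for all x, given by C(u) = F(F_1^{-1}(u_1),...,F_d^{-1}(u_d)) where F_i^{-1} is the generalized inverse (quantile function) of F_i. -/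
open MeasureTheory Set

/-- A `d`-dimensional copula: the joint CDF of a probability measure on `[0,1]^d`
all of whose one-dimensional marginals are uniform on `[0,1]`. -/
def IsCopula (d : ℕ) (C : (Fin d → ℝ) → ℝ) : Prop :=
  ∃ μ : Measure (Fin d → ℝ), IsProbabilityMeasure μ ∧
    (∀ i : Fin d, Measure.map (fun x => x i) μ = volume.restrict (Icc (0:ℝ) 1)) ∧
    (∀ u : Fin d → ℝ, C u = (μ {x | ∀ i, x i ≤ u i}).toReal)

open Filter Topology
set_option linter.unusedSectionVars false
set_option maxHeartbeats 1000000


section OneD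
variable {m : Measure ℝ} [IsProbabilityMeasure m] {G : ℝ → ℝ}

lemma sklarG_mono (hG : ∀ t, G t = (m (Iic t)).toReal) : Monotone G := fun a b hab => by
  rw [hG, hG]
  exact ENNReal.toReal_mono (measure_ne_top m _) (measure_mono (Iic_subset_Iic.2 hab))

lemma sklarG_nonneg (hG : ∀ t, G t = (m (Iic t)).toReal) (t : ℝ) : 0 ≤ G t := by
  rw [hG]; exact ENNReal.toReal_nonneg

lemma sklarG_le_one (hG : ∀ t, G t = (m (Iic t)).toReal) (t : ℝ) : G t ≤ 1 := by
  rw [hG]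
  exact ENNReal.toReal_le_of_le_ofReal one_pos.le (by simpa using prob_le_one)

lemma sklarG_ofReal (hG : ∀ t, G t = (m (Iic t)).toReal) (t : ℝ) :
    ENNReal.ofReal (G t) = m (Iic t) := by
  rw [hG]; exact ENNReal.ofReal_toReal (measure_ne_top m _)

lemma sklarG_tendsto_atBot (hG : ∀ t, G t = (m (Iic t)).toReal) :
    Tendsto G atBot (𝓝 0) := by
  have : G = fun t => ProbabilityTheory.cdf m t := funext fun t => by
    rw [hG, ProbabilityTheory.cdf_eq_real, measureReal_def]
  rw [this]
  exact ProbabilityTheory.tendsto_cdf_atBot m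

lemma sklarG_tendsto_atTop (hG : ∀ t, G t = (m (Iic t)).toReal) :
    Tendsto G atTop (𝓝 1) := by
  have : G = fun t => ProbabilityTheory.cdf m t := funext fun t => by
    rw [hG, ProbabilityTheory.cdf_eq_real, measureReal_def]
  rw [this]
  exact ProbabilityTheory.tendsto_cdf_atTop m

lemma sklarG_surj (hG : ∀ t, G t = (m (Iic t)).toReal) (hc : Continuous G)
    {c : ℝ} (hc0 : 0 < c) (hc1 : c < 1) : ∃ s, G s = c := by
  obtain ⟨a, ha⟩ : ∃ a, G a < c :=
    ((sklarG_tendsto_atBot hG).eventually (eventually_lt_nhds hc0)).exists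
  obtain ⟨b, hb⟩ : ∃ b, c < G b :=
    ((sklarG_tendsto_atTop hG).eventually (eventually_gt_nhds hc1)).exists
  have hab : a ≤ b := by
    by_contra h
    exact absurd (sklarG_mono hG (le_of_not_ge h)) (by linarith)
  have := intermediate_value_Icc hab hc.continuousOn (by constructor <;> linarith : c ∈ Icc (G a) (G b))
  obtain ⟨s, _, hs⟩ := this
  exact ⟨s, hs⟩

lemma sklarG_measure_le (hG : ∀ t, G t = (m (Iic t)).toReal) (hc : Continuous G)
    (c : ℝ) : m {t | G t ≤ c} ≤ ENNReal.ofReal c := by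
  rcases le_or_gt 1 c with h1 | h1
  · calc m {t | G t ≤ c} ≤ 1 := prob_le_one
    _ = ENNReal.ofReal 1 := by simp
    _ ≤ ENNReal.ofReal c := ENNReal.ofReal_le_ofReal h1
  rcases lt_or_ge c 0 with h0 | h0
  · have : {t | G t ≤ c} = ∅ := by
      ext t; simp only [mem_setOf_eq, mem_empty_iff_false, iff_false, not_le]
      exact lt_of_lt_of_le h0 (sklarG_nonneg hG t)
    simp [this]
  refine ENNReal.le_of_forall_pos_le_add fun ε hε _ => ?_
  set c' : ℝ := min (c + ε) ((c + 1) / 2) with hc'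
  have hεR : (0:ℝ) < ε := hε
  have hc'c : c < c' := lt_min (by linarith) (by linarith)
  have hc'1 : c' < 1 := lt_of_le_of_lt (min_le_right _ _) (by linarith)
  obtain ⟨s, hs⟩ := sklarG_surj hG hc (lt_of_le_of_lt h0 hc'c) hc'1
  have hsub : {t | G t ≤ c} ⊆ Iic s := by
    intro t ht
    by_contra h
    have := sklarG_mono hG (le_of_not_ge (fun hts => h hts))
    rw [hs] at this
    exact absurd (le_trans this ht) (not_le.2 hc'c)
  calc m {t | G t ≤ c} ≤ m (Iic s) := measure_mono hsub
    _ = ENNReal.ofReal c' := by rw [← sklarG_ofReal hG, hs]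
    _ ≤ ENNReal.ofReal (c + ε) := ENNReal.ofReal_le_ofReal (min_le_left _ _)
    _ ≤ ENNReal.ofReal c + ε := by
        rw [ENNReal.ofReal_add h0 hεR.le, ENNReal.ofReal_coe_nnreal]

end OneD

section OneD2
variable {m : Measure ℝ} [IsProbabilityMeasure m] {G : ℝ → ℝ}

lemma sklarG_map (hG : ∀ t, G t = (m (Iic t)).toReal) (hc : Continuous G) :
    Measure.map G m = volume.restrict (Icc 0 1) := by
  have hmeas := hc.measurable
  haveI : IsProbabilityMeasure (Measure.map G m) :=
    Measure.isProbabilityMeasure_map hmeas.aemeasurable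
  refine Measure.ext_of_Iic (Measure.map G m) _ fun c => ?_
  rw [Measure.map_apply hmeas measurableSet_Iic, Measure.restrict_apply measurableSet_Iic]
  have hpre : G ⁻¹' Iic c = {t | G t ≤ c} := rfl
  rw [hpre]
  rcases lt_or_ge c 0 with h0 | h0
  · have h1 : {t | G t ≤ c} = ∅ := by
      ext t; simp only [mem_setOf_eq, mem_empty_iff_false, iff_false, not_le]
      exact lt_of_lt_of_le h0 (sklarG_nonneg hG t)
    have h2 : Iic c ∩ Icc (0:ℝ) 1 = ∅ := by
      rw [eq_empty_iff_forall_notMem]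
      rintro x ⟨hx1, hx2, _⟩
      simp only [mem_Iic] at hx1
      linarith
    rw [h1, h2]
    simp
  rcases lt_or_ge c 1 with h1 | h1
  · have hR : Iic c ∩ Icc (0:ℝ) 1 = Icc 0 c := by
      ext x
      simp only [mem_inter_iff, mem_Iic, mem_Icc]
      constructor
      · rintro ⟨ha, hb, _⟩; exact ⟨hb, ha⟩
      · rintro ⟨ha, hb⟩; exact ⟨hb, ha, hb.trans h1.le⟩
    rw [hR, Real.volume_Icc]
    refine le_antisymm (by simpa using sklarG_measure_le hG hc c) ?_
    rcases eq_or_lt_of_le h0 with h0' | h0'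
    · simp [← h0']
    · obtain ⟨s, hs⟩ := sklarG_surj hG hc h0' h1
      calc ENNReal.ofReal (c - 0) = m (Iic s) := by rw [sub_zero, ← hs, sklarG_ofReal hG]
        _ ≤ m {t | G t ≤ c} := measure_mono fun t ht => by
            simp only [mem_Iic] at ht
            simp only [mem_setOf_eq]
            rw [← hs]
            exact sklarG_mono hG ht
  · have hset : {t | G t ≤ c} = univ :=
      eq_univ_of_forall fun t => le_trans (sklarG_le_one hG t) h1
    have hR : Iic c ∩ Icc (0:ℝ) 1 = Icc 0 1 :=
      inter_eq_self_of_subset_right fun x hx => le_trans hx.2 h1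
    rw [hset, hR, Real.volume_Icc, measure_univ]
    simp

lemma sklarG_sInf (hG : ∀ t, G t = (m (Iic t)).toReal) (hc : Continuous G)
    {u : ℝ} (hu : u ∈ Ioo (0:ℝ) 1) : G (sInf {t | u ≤ G t}) = u := by
  set S := {t | u ≤ G t} with hSdef
  have hS : IsClosed S := isClosed_le continuous_const hc
  have hne : S.Nonempty := by
    obtain ⟨t, ht⟩ := ((sklarG_tendsto_atTop hG).eventually (eventually_gt_nhds hu.2)).exists
    exact ⟨t, le_of_lt ht⟩
  obtain ⟨b, hb⟩ := eventually_atBot.1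
    ((sklarG_tendsto_atBot hG).eventually (eventually_lt_nhds hu.1))
  have hbdd : BddBelow S := ⟨b, fun t ht => le_of_not_gt fun h => absurd ht (not_le.2 (hb t h.le))⟩
  have hmem : sInf S ∈ S := hS.csInf_mem hne hbdd
  refine le_antisymm ?_ hmem
  by_contra h
  push_neg at h
  have hnb : G ⁻¹' Ioi u ∈ 𝓝 (sInf S) := hc.continuousAt (Ioi_mem_nhds h)
  obtain ⟨ε, hε, hball⟩ := Metric.mem_nhds_iff.1 hnb
  have hdist : sInf S - ε/2 ∈ Metric.ball (sInf S) ε := by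
    rw [Metric.mem_ball, Real.dist_eq, show sInf S - ε/2 - sInf S = -(ε/2) by ring, abs_neg,
      abs_of_nonneg (by linarith)]
    linarith
  have ht : sInf S - ε/2 ∈ S := le_of_lt (by simpa using hball hdist)
  have := csInf_le hbdd ht
  linarith

end OneD2


lemma sklar_diff_null_eq {α : Type*} [MeasurableSpace α] {μ : Measure α} {A B : Set α}
    (hAB : A ⊆ B) (h : μ (B \ A) = 0) : μ B = μ A := by
  refine le_antisymm ?_ (measure_mono hAB)
  calc μ B ≤ μ (A ∪ (B \ A)) := measure_mono (fun x hx => by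
        by_cases hxA : x ∈ A
        · exact Or.inl hxA
        · exact Or.inr ⟨hx, hxA⟩)
    _ ≤ μ A + μ (B \ A) := measure_union_le _ _
    _ = μ A := by rw [h, add_zero]

lemma sklar_copula_ext {d : ℕ} {C1 C2 : (Fin d → ℝ) → ℝ}
    (h1 : IsCopula d C1) (h2 : IsCopula d C2)
    (h : ∀ u : Fin d → ℝ, (∀ i, u i ∈ Ioo (0:ℝ) 1) → C1 u = C2 u) : C1 = C2 := by
  obtain ⟨ν1, hp1, hm1, hc1⟩ := h1
  obtain ⟨ν2, hp2, hm2, hc2⟩ := h2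
  haveI := hp1; haveI := hp2
  funext u
  rw [hc1 u, hc2 u]
  set S : (Fin d → ℝ) → Set (Fin d → ℝ) := fun w => {x | ∀ i, x i ≤ w i} with hS
  -- preliminaries about the marginal values
  have marg : ∀ (ν : Measure (Fin d → ℝ)),
      (∀ i : Fin d, Measure.map (fun x => x i) ν = volume.restrict (Icc (0:ℝ) 1)) →
      ∀ (i : Fin d) (s : Set ℝ), MeasurableSet s →
      ν ((fun x => x i) ⁻¹' s) = volume.restrict (Icc (0:ℝ) 1) s := by
    intro ν hm i s hs
    rw [← hm i, Measure.map_apply (measurable_pi_apply i) hs]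
  by_cases h0 : ∃ i, u i ≤ 0
  · obtain ⟨i, hi⟩ := h0
    have key0 : ∀ (ν : Measure (Fin d → ℝ)),
        (∀ i : Fin d, Measure.map (fun x => x i) ν = volume.restrict (Icc (0:ℝ) 1)) →
        ν (S u) = 0 := by
      intro ν hm
      refine le_antisymm ?_ zero_le
      calc ν (S u) ≤ ν ((fun x => x i) ⁻¹' (Iic (u i))) :=
            measure_mono (fun x hx => hx i)
        _ = volume.restrict (Icc (0:ℝ) 1) (Iic (u i)) := marg ν hm i _ measurableSet_Iic
        _ = volume (Iic (u i) ∩ Icc 0 1) := Measure.restrict_apply measurableSet_Iic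
        _ ≤ volume {(0:ℝ)} := measure_mono (by
            rintro x ⟨hx1, hx2, _⟩
            simp only [mem_Iic] at hx1
            simp only [mem_singleton_iff]
            linarith)
        _ = 0 := Real.volume_singleton
    rw [key0 ν1 hm1, key0 ν2 hm2]
  · push_neg at h0
    set u' : Fin d → ℝ := fun i => min (u i) 1 with hu'
    have hu'pos : ∀ i, 0 < u' i := fun i => lt_min (h0 i) one_pos
    have hu'le : ∀ i, u' i ≤ 1 := fun i => min_le_right _ _
    set q : ℕ → ℝ := fun n => ((n:ℝ)+1)/((n:ℝ)+2) with hqdef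
    have hq0 : ∀ n, 0 < q n := fun n => by positivity
    have hq1 : ∀ n, q n < 1 := fun n => by
      rw [hqdef, div_lt_one (by positivity)]; linarith
    have hqmono : Monotone q := by
      intro n m hnm
      rw [hqdef]
      have hnm' : (n:ℝ) ≤ m := Nat.cast_le.2 hnm
      rw [div_le_div_iff₀ (by positivity) (by positivity)]
      nlinarith
    have hqtend : Tendsto q atTop (𝓝 1) := by
      have hq' : ∀ n : ℕ, q n = 1 - (((n:ℝ)+2))⁻¹ := by
        intro n
        rw [hqdef]
        field_simp
        ring
      have h2 : Tendsto (fun n : ℕ => ((n:ℝ)+2)) atTop atTop :=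
        tendsto_atTop_add_const_right _ 2 tendsto_natCast_atTop_atTop
      have h3 := h2.inv_tendsto_atTop
      have h4 : Tendsto (fun n : ℕ => (1:ℝ) - ((n:ℝ)+2)⁻¹) atTop (𝓝 (1-0)) :=
        Tendsto.sub tendsto_const_nhds h3
      rw [sub_zero] at h4
      exact (funext hq' : q = _) ▸ h4
    set v : ℕ → Fin d → ℝ := fun n i => u' i * q n with hv
    have hvmem : ∀ n i, v n i ∈ Ioo (0:ℝ) 1 := by
      intro n i
      constructor
      · exact mul_pos (hu'pos i) (hq0 n)
      · calc u' i * q n ≤ 1 * q n :=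
            mul_le_mul_of_nonneg_right (hu'le i) (hq0 n).le
          _ = q n := one_mul _
          _ < 1 := hq1 n
    have hvlt : ∀ n i, v n i < u' i := by
      intro n i
      calc v n i = u' i * q n := rfl
        _ < u' i * 1 := by
            exact mul_lt_mul_of_pos_left (hq1 n) (hu'pos i)
        _ = u' i := mul_one _
    have hSmono : Monotone (fun n => S (v n)) := by
      intro n m hnm x hx i
      calc x i ≤ v n i := hx i
        _ ≤ v m i := mul_le_mul_of_nonneg_left (hqmono hnm) (hu'pos i).le
    have key : ∀ (ν : Measure (Fin d → ℝ)), IsProbabilityMeasure ν →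
        (∀ i : Fin d, Measure.map (fun x => x i) ν = volume.restrict (Icc (0:ℝ) 1)) →
        ν (S u) = ⨆ n, ν (S (v n)) := by
      intro ν hp hm
      haveI := hp
      have null_gt1 : ∀ i : Fin d, ν {x | 1 < x i} = 0 := by
        intro i
        have := marg ν hm i (Ioi 1) measurableSet_Ioi
        rw [Measure.restrict_apply measurableSet_Ioi] at this
        have he : Ioi (1:ℝ) ∩ Icc 0 1 = ∅ := by
          rw [eq_empty_iff_forall_notMem]
          rintro x ⟨hx1, _, hx3⟩
          simp only [mem_Ioi] at hx1
          linarith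
        calc ν {x | 1 < x i} = volume (Ioi (1:ℝ) ∩ Icc 0 1) := this
          _ = 0 := by rw [he, measure_empty]
      have null_eq : ∀ (i : Fin d) (a : ℝ), ν {x | x i = a} = 0 := by
        intro i a
        have := marg ν hm i {a} (measurableSet_singleton a)
        rw [Measure.restrict_apply (measurableSet_singleton a)] at this
        refine le_antisymm ?_ zero_le
        calc ν {x | x i = a} = volume ({a} ∩ Icc 0 1) := this
          _ ≤ volume {a} := measure_mono inter_subset_left
          _ = 0 := Real.volume_singleton
      -- step 1 : ν (S u) = ν (S u')
      have eq1 : ν (S u) = ν (S u') := by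
        refine sklar_diff_null_eq (fun x hx i => le_trans (hx i) (min_le_left _ _)) ?_
        refine measure_mono_null ?_ (measure_iUnion_null null_gt1)
        rintro x ⟨hxu, hxu'⟩
        obtain ⟨i, hi⟩ := not_forall.1 hxu'
        push_neg at hi
        refine mem_iUnion.2 ⟨i, ?_⟩
        simp only [mem_setOf_eq]
        by_contra hle
        push_neg at hle
        exact absurd (le_min (hxu i) hle) (not_le.2 hi)
      -- step 2 : ν (S u') = ν T where T is the open corner
      have eq2 : ν (S u') = ν {x | ∀ i, x i < u' i} := by
        refine sklar_diff_null_eq (fun x hx i => (hx i).le) ?_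
        refine measure_mono_null ?_ (measure_iUnion_null fun i => null_eq i (u' i))
        rintro x ⟨hxu, hxT⟩
        obtain ⟨i, hi⟩ := not_forall.1 hxT
        push_neg at hi
        exact mem_iUnion.2 ⟨i, le_antisymm (hxu i) hi⟩
      -- step 3 : T = ⋃ n, S (v n)
      have eq3 : {x : Fin d → ℝ | ∀ i, x i < u' i} = ⋃ n, S (v n) := by
        ext x
        constructor
        · intro hx
          have hev : ∀ᶠ n in (atTop : Filter ℕ), ∀ i, x i < v n i := by
            rw [eventually_all]
            intro i
            have htend : Tendsto (fun n => v n i) atTop (𝓝 (u' i)) := by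
              have := hqtend.const_mul (u' i)
              rw [mul_one] at this
              exact this
            exact htend.eventually (eventually_gt_nhds (hx i))
          obtain ⟨n, hn⟩ := hev.exists
          exact mem_iUnion.2 ⟨n, fun i => (hn i).le⟩
        · intro hx
          obtain ⟨n, hn⟩ := mem_iUnion.1 hx
          exact fun i => lt_of_le_of_lt (hn i) (hvlt n i)
      rw [eq1, eq2, eq3]
      exact Monotone.measure_iUnion hSmono
    have hvals : ∀ n, ν1 (S (v n)) = ν2 (S (v n)) := by
      intro n
      have := h (v n) (hvmem n)
      rw [hc1, hc2] at this
      exact (ENNReal.toReal_eq_toReal_iff' (measure_ne_top _ _) (measure_ne_top _ _)).1 this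
    rw [key ν1 hp1 hm1, key ν2 hp2 hm2]
    congr 1
    exact iSup_congr hvals

/-- Uniqueness part of Sklar's theorem: if the marginal CDFs of a joint CDF `F` are
continuous, there is a unique copula `C` with `F(x) = C(F₁(x₁),…,F_d(x_d))`, given on the
open cube by the quantile formula `C(u) = F(F₁⁻¹(u₁),…,F_d⁻¹(u_d))`. -/
theorem sklar_uniqueness
    (d : ℕ) (μ : Measure (Fin d → ℝ)) [IsProbabilityMeasure μ]
    (F : (Fin d → ℝ) → ℝ) (hF : ∀ x, F x = (μ {y | ∀ i, y i ≤ x i}).toReal)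
    (Fm : Fin d → ℝ → ℝ) (hFm : ∀ i t, Fm i t = (μ {y | y i ≤ t}).toReal)
    (hcont : ∀ i, Continuous (Fm i)) :
    (∃! C : (Fin d → ℝ) → ℝ,
        IsCopula d C ∧ ∀ x, F x = C (fun i => Fm i (x i))) ∧
    (∀ C : (Fin d → ℝ) → ℝ,
      (IsCopula d C ∧ ∀ x, F x = C (fun i => Fm i (x i))) →
      ∀ u : Fin d → ℝ, (∀ i, u i ∈ Ioo (0:ℝ) 1) →
        C u = F (fun i => sInf {t : ℝ | u i ≤ Fm i t})) := by
  classical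
  have hφc : Continuous (fun (x : Fin d → ℝ) (i : Fin d) => Fm i (x i)) :=
    continuous_pi fun i => (hcont i).comp (continuous_apply i)
  have hφm : Measurable (fun (x : Fin d → ℝ) (i : Fin d) => Fm i (x i)) := hφc.measurable
  have hinst : ∀ i : Fin d, IsProbabilityMeasure (Measure.map (fun x : Fin d → ℝ => x i) μ) :=
    fun i => Measure.isProbabilityMeasure_map (measurable_pi_apply i).aemeasurable
  have hμi : ∀ (i : Fin d) (t : ℝ),
      Fm i t = ((Measure.map (fun x : Fin d → ℝ => x i) μ) (Iic t)).toReal := by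
    intro i t
    rw [Measure.map_apply (measurable_pi_apply i) measurableSet_Iic]
    exact hFm i t
  have hmono : ∀ i, Monotone (Fm i) := fun i => by
    haveI := hinst i; exact sklarG_mono (hμi i)
  have hofReal : ∀ (i : Fin d) (t : ℝ),
      ENNReal.ofReal (Fm i t) = μ ((fun x : Fin d → ℝ => x i) ⁻¹' Iic t) := by
    intro i t
    haveI := hinst i
    rw [sklarG_ofReal (hμi i) t, Measure.map_apply (measurable_pi_apply i) measurableSet_Iic]
  have hle : ∀ (i : Fin d) (c : ℝ),
      (Measure.map (fun x : Fin d → ℝ => x i) μ) {t | Fm i t ≤ c} ≤ ENNReal.ofReal c := by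
    intro i c
    haveI := hinst i
    exact sklarG_measure_le (hμi i) (hcont i) c
  have hmap : ∀ i : Fin d,
      Measure.map (Fm i) (Measure.map (fun x : Fin d → ℝ => x i) μ)
        = volume.restrict (Icc 0 1) := by
    intro i
    haveI := hinst i
    exact sklarG_map (hμi i) (hcont i)
  -- the candidate copula
  set ν : Measure (Fin d → ℝ) := Measure.map (fun (x : Fin d → ℝ) (i : Fin d) => Fm i (x i)) μ
    with hνdef
  haveI hνp : IsProbabilityMeasure ν := Measure.isProbabilityMeasure_map hφm.aemeasurable
  have hmargν : ∀ i : Fin d, Measure.map (fun x : Fin d → ℝ => x i) ν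
      = volume.restrict (Icc (0:ℝ) 1) := by
    intro i
    rw [hνdef, Measure.map_map (measurable_pi_apply i) hφm]
    have : ((fun x : Fin d → ℝ => x i) ∘ (fun (x : Fin d → ℝ) (i : Fin d) => Fm i (x i)))
        = (Fm i) ∘ (fun x : Fin d → ℝ => x i) := rfl
    rw [this, ← Measure.map_map (hcont i).measurable (measurable_pi_apply i)]
    exact hmap i
  set C₀ : (Fin d → ℝ) → ℝ := fun w => (ν {x | ∀ i, x i ≤ w i}).toReal with hC₀def
  have hcop0 : IsCopula d C₀ := ⟨ν, hνp, hmargν, fun u => rfl⟩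
  have hSm : ∀ w : Fin d → ℝ, MeasurableSet {x : Fin d → ℝ | ∀ i, x i ≤ w i} := by
    intro w
    have : {x : Fin d → ℝ | ∀ i, x i ≤ w i}
        = ⋂ i, (fun x : Fin d → ℝ => x i) ⁻¹' Iic (w i) := by
      ext x; simp [mem_iInter]
    rw [this]
    exact MeasurableSet.iInter fun i => (measurable_pi_apply i) measurableSet_Iic
  -- F = C₀ ∘ marginals
  have hFC : ∀ x, F x = C₀ (fun i => Fm i (x i)) := by
    intro x
    have hνS : ν {z | ∀ i, z i ≤ Fm i (x i)} = μ {y | ∀ i, Fm i (y i) ≤ Fm i (x i)} := by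
      rw [hνdef, Measure.map_apply hφm (hSm (fun i => Fm i (x i)))]
      rfl
    have hkey : μ {y | ∀ i, Fm i (y i) ≤ Fm i (x i)} = μ {y | ∀ i, y i ≤ x i} := by
      have hAB : {y : Fin d → ℝ | ∀ i, y i ≤ x i}
          ⊆ {y | ∀ i, Fm i (y i) ≤ Fm i (x i)} := fun y hy i => hmono i (hy i)
      refine sklar_diff_null_eq hAB ?_
      have hnulli : ∀ i : Fin d,
          μ (((fun y : Fin d → ℝ => y i) ⁻¹' {t | Fm i t ≤ Fm i (x i)})
             \ ((fun y : Fin d → ℝ => y i) ⁻¹' Iic (x i))) = 0 := by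
        intro i
        have hms : MeasurableSet {t : ℝ | Fm i t ≤ Fm i (x i)} :=
          (isClosed_le (hcont i) continuous_const).measurableSet
        have hAiBi : ((fun y : Fin d → ℝ => y i) ⁻¹' Iic (x i))
            ⊆ ((fun y : Fin d → ℝ => y i) ⁻¹' {t | Fm i t ≤ Fm i (x i)}) :=
          fun y hy => hmono i hy
        have hμBi : μ ((fun y : Fin d → ℝ => y i) ⁻¹' {t | Fm i t ≤ Fm i (x i)})
            ≤ ENNReal.ofReal (Fm i (x i)) := by
          rw [show μ ((fun y : Fin d → ℝ => y i) ⁻¹' {t | Fm i t ≤ Fm i (x i)})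
              = (Measure.map (fun x : Fin d → ℝ => x i) μ) {t | Fm i t ≤ Fm i (x i)} from
            (Measure.map_apply (measurable_pi_apply i) hms).symm]
          exact hle i _
        have hμAi : μ ((fun y : Fin d → ℝ => y i) ⁻¹' Iic (x i))
            = ENNReal.ofReal (Fm i (x i)) := (hofReal i (x i)).symm
        have hd := measure_diff hAiBi
          (((measurable_pi_apply i) measurableSet_Iic).nullMeasurableSet)
          (measure_ne_top μ _)
        rw [hd, hμAi]
        exact tsub_eq_zero_of_le hμBi
      refine measure_mono_null ?_ (measure_iUnion_null hnulli)
      rintro y ⟨hyB, hyA⟩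
      obtain ⟨i, hi⟩ := not_forall.1 hyA
      exact mem_iUnion.2 ⟨i, ⟨hyB i, hi⟩⟩
    rw [hF x, hC₀def]
    simp only
    rw [hνS, hkey]
  -- quantile representation on the open cube
  have hquant : ∀ C : (Fin d → ℝ) → ℝ, (∀ x, F x = C (fun i => Fm i (x i))) →
      ∀ u : Fin d → ℝ, (∀ i, u i ∈ Ioo (0:ℝ) 1) →
      C u = F (fun i => sInf {t : ℝ | u i ≤ Fm i t}) := by
    intro C hfc u hu
    have hqu : ∀ i, Fm i (sInf {t : ℝ | u i ≤ Fm i t}) = u i := fun i => by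
      haveI := hinst i
      exact sklarG_sInf (hμi i) (hcont i) (hu i)
    have hphi : (fun i => Fm i (sInf {t : ℝ | u i ≤ Fm i t})) = u := funext hqu
    calc C u = C (fun i => Fm i (sInf {t : ℝ | u i ≤ Fm i t})) := by rw [hphi]
      _ = F (fun i => sInf {t : ℝ | u i ≤ Fm i t}) :=
        (hfc (fun i => sInf {t : ℝ | u i ≤ Fm i t})).symm
  refine ⟨⟨C₀, ⟨hcop0, hFC⟩, ?_⟩, ?_⟩
  · intro C' hC'
    refine sklar_copula_ext hC'.1 hcop0 fun u hu => ?_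
    rw [hquant C' hC'.2 u hu, hquant C₀ hFC u hu]
  · intro C hC u hu
    exact hquant C hC.2 u hu
end

section
/- Archimedean construction yields a valid bivariate copula: if ψ : (0,1] → [0,∞) is continuous, strictly decreasing, convex, with ψ(1) = 0, and ψ^{[-1]} denotes its pseudo-inverse, then C(u,v) = ψ^{[-1]}(ψ(u) + ψ(v)) is a 2-dimensional copula, i.e., C is grounded, has uniform margins (C(u,1) = u, C(1,v) = v), and is 2-increasing. -/
open Set


lemma arch_lemC {ψ : ℝ → ℝ} (hanti : StrictAntiOn ψ (Ioc (0:ℝ) 1)) {x y : ℝ}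
    (hx : x ∈ Ioc (0:ℝ) 1) (hy : y ∈ Ioc (0:ℝ) 1) (h : ψ x ≤ ψ y) : y ≤ x := by
  by_contra hc
  push_neg at hc
  exact absurd (hanti hx hy hc) (not_lt.mpr h)

lemma arch_lemB {ψ : ℝ → ℝ} (hconv : ConvexOn ℝ (Ioc (0:ℝ) 1) ψ) {a b x y : ℝ}
    (ha : a ∈ Ioc (0:ℝ) 1) (hb : b ∈ Ioc (0:ℝ) 1)
    (hax : a ≤ x) (hxb : x ≤ b) (hay : a ≤ y) (hyb : y ≤ b)
    (hsum : x + y = a + b) : ψ x + ψ y ≤ ψ a + ψ b := by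
  rcases eq_or_lt_of_le (hax.trans hxb : a ≤ b) with heq | hab
  · have hxa : x = a := le_antisymm (heq ▸ hxb) hax
    have hya : y = b := by linarith
    rw [hxa, hya]
  · set lam := (b - x) / (b - a) with hlam
    set mu := (x - a) / (b - a) with hmu
    have hba : (0:ℝ) < b - a := by linarith
    have hl0 : 0 ≤ lam := div_nonneg (by linarith) hba.le
    have hm0 : 0 ≤ mu := div_nonneg (by linarith) hba.le
    have hlm : lam + mu = 1 := by rw [hlam, hmu]; field_simp; ring
    have hx' : lam • a + mu • b = x := by
      simp only [smul_eq_mul, hlam, hmu]; field_simp; ring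
    have hy' : mu • a + lam • b = y := by
      simp only [smul_eq_mul, hlam, hmu]; field_simp; nlinarith [hsum]
    have h1 := hconv.2 ha hb hl0 hm0 hlm
    have h2 := hconv.2 ha hb hm0 hl0 (by linarith)
    rw [hx'] at h1
    rw [hy'] at h2
    simp only [smul_eq_mul] at h1 h2
    have e1 : (lam + mu) * ψ a = 1 * ψ a := by rw [hlm]
    have e2 : (lam + mu) * ψ b = 1 * ψ b := by rw [hlm]
    linarith [h1, h2, e1, e2]

lemma arch_lemA {ψ : ℝ → ℝ} (hcont : ContinuousOn ψ (Ioc (0:ℝ) 1))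
    (hconv : ConvexOn ℝ (Ioc (0:ℝ) 1) ψ) {x y q : ℝ}
    (hx : x ∈ Ioc (0:ℝ) 1) (hy : y ∈ Ioc (0:ℝ) 1) (hxy : x + y ≤ 1)
    (hq : ∀ t ∈ Ioc (0:ℝ) 1, ψ t ≤ q) :
    ψ x + ψ y ≤ q + ψ (x + y) := by
  refine le_of_forall_pos_le_add (fun ε hε => ?_)
  have hz : x + y ∈ Ioc (0:ℝ) 1 := ⟨by linarith [hx.1, hy.1], hxy⟩
  have hcw := hcont _ hz
  rw [Metric.continuousWithinAt_iff] at hcw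
  obtain ⟨δ, hδ, hδ'⟩ := hcw ε hε
  set s := min (δ/2) (min x y) with hs
  have hs0 : 0 < s := lt_min (by linarith) (lt_min hx.1 hy.1)
  have hsx : s ≤ x := (min_le_right _ _).trans (min_le_left _ _)
  have hsy : s ≤ y := (min_le_right _ _).trans (min_le_right _ _)
  have hw : x + y - s ∈ Ioc (0:ℝ) 1 := ⟨by linarith [hx.1], by linarith⟩
  have hsI : s ∈ Ioc (0:ℝ) 1 := ⟨hs0, hsx.trans hx.2⟩
  have hdist : dist (x + y - s) (x + y) < δ := by
    rw [Real.dist_eq]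
    have h1 : |x + y - s - (x + y)| = s := by
      rw [abs_of_nonpos (by linarith)]; ring
    rw [h1]
    have := min_le_left (δ/2) (min x y)
    linarith
  have hclose := hδ' hw hdist
  rw [Real.dist_eq] at hclose
  have hB := arch_lemB hconv hsI hw hsx (by linarith) hsy (by linarith) (by ring)
  have hqs := hq s hsI
  have habs := abs_lt.mp hclose
  linarith [habs.1, habs.2]

/-- The Archimedean construction yields a valid bivariate copula: for a continuous, strictly
decreasing, convex generator `ψ` on `(0,1]` with `ψ(1) = 0` and pseudo-inverse `ψinv`,
the function `C(u,v) = ψinv(ψ(u) + ψ(v))` (set to `0` if `u = 0` or `v = 0`) is grounded,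
has uniform margins, and is 2-increasing. -/
theorem archimedean_is_copula
    (ψ ψinv : ℝ → ℝ)
    (hcont : ContinuousOn ψ (Ioc (0:ℝ) 1))
    (hanti : StrictAntiOn ψ (Ioc (0:ℝ) 1))
    (hconv : ConvexOn ℝ (Ioc (0:ℝ) 1) ψ)
    (hψ1 : ψ 1 = 0) (hψnn : ∀ u ∈ Ioc (0:ℝ) 1, 0 ≤ ψ u)
    (hinv₁ : ∀ u ∈ Ioc (0:ℝ) 1, ψinv (ψ u) = u)
    (hinv₂ : ∀ t ∈ ψ '' Ioc (0:ℝ) 1, ψ (ψinv t) = t ∧ ψinv t ∈ Ioc (0:ℝ) 1)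
    (hinv₃ : ∀ t : ℝ, 0 ≤ t → t ∉ ψ '' Ioc (0:ℝ) 1 → ψinv t = 0)
    (C : ℝ → ℝ → ℝ)
    (hC : ∀ u v, C u v = if u = 0 ∨ v = 0 then 0 else ψinv (ψ u + ψ v)) :
    (∀ u ∈ Icc (0:ℝ) 1, C u 0 = 0 ∧ C 0 u = 0) ∧
    (∀ u ∈ Icc (0:ℝ) 1, C u 1 = u ∧ C 1 u = u) ∧
    (∀ u₁ u₂ v₁ v₂ : ℝ, u₁ ∈ Icc (0:ℝ) 1 → u₂ ∈ Icc (0:ℝ) 1 →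
      v₁ ∈ Icc (0:ℝ) 1 → v₂ ∈ Icc (0:ℝ) 1 → u₁ ≤ u₂ → v₁ ≤ v₂ →
      0 ≤ C u₂ v₂ - C u₂ v₁ - C u₁ v₂ + C u₁ v₁) := by
  -- D : the image is downward closed within [0, ∞)
  have hD : ∀ s t : ℝ, 0 ≤ s → s ≤ t → t ∈ ψ '' Ioc (0:ℝ) 1 → s ∈ ψ '' Ioc (0:ℝ) 1 := by
    rintro s t hs hst ⟨w, hw, rfl⟩
    have hsub : Icc w 1 ⊆ Ioc (0:ℝ) 1 := fun z hz => ⟨lt_of_lt_of_le hw.1 hz.1, hz.2⟩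
    have hiv := intermediate_value_Icc' hw.2 (hcont.mono hsub)
    have : s ∈ Icc (ψ 1) (ψ w) := ⟨hψ1 ▸ hs, hst⟩
    exact (image_mono hsub) (hiv this)
  have hE : ∀ q : ℝ, 0 ≤ q → q ∉ ψ '' Ioc (0:ℝ) 1 → ∀ t ∈ Ioc (0:ℝ) 1, ψ t ≤ q := by
    intro q hq hqn t ht
    by_contra h
    push_neg at h
    exact hqn (hD q (ψ t) hq h.le ⟨t, ht, rfl⟩)
  have hG : ∀ t : ℝ, 0 ≤ t → 0 ≤ ψinv t ∧ ψinv t ≤ 1 := by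
    intro t ht
    by_cases h : t ∈ ψ '' Ioc (0:ℝ) 1
    · exact ⟨(hinv₂ t h).2.1.le, (hinv₂ t h).2.2⟩
    · rw [hinv₃ t ht h]; norm_num
  have hF : ∀ s t : ℝ, 0 ≤ s → s ≤ t → ψinv t ≤ ψinv s := by
    intro s t hs hst
    by_cases h : t ∈ ψ '' Ioc (0:ℝ) 1
    · have hsI := hD s t hs hst h
      have h2 := hinv₂ t h
      have h3 := hinv₂ s hsI
      exact arch_lemC hanti h3.2 h2.2 (by rw [h3.1, h2.1]; exact hst)
    · rw [hinv₃ t (hs.trans hst) h]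
      exact (hG s hs).1
  -- the key four-point inequality for ψinv
  have hkey : ∀ p p' q' q : ℝ, 0 ≤ p → p ≤ p' → p' ≤ q' → q' ≤ q → p + q = p' + q' →
      ψinv p' + ψinv q' ≤ ψinv p + ψinv q := by
    intro p p' q' q hp hpp hpq hqq hsum
    by_cases hq' : q' ∈ ψ '' Ioc (0:ℝ) 1
    · have hp'I := hD p' q' (by linarith) hpq hq'
      have hpI := hD p p' hp hpp hp'I
      obtain ⟨hψα', hα'⟩ := hinv₂ p' hp'I
      obtain ⟨hψβ', hβ'⟩ := hinv₂ q' hq'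
      obtain ⟨hψα, hα⟩ := hinv₂ p hpI
      by_cases hqI : q ∈ ψ '' Ioc (0:ℝ) 1
      · -- main convexity case: all four in the image
        obtain ⟨hψβ, hβ⟩ := hinv₂ q hqI
        rcases eq_or_lt_of_le (hpp.trans (hpq.trans hqq)) with he | hpq2
        · have hp'e : p' = p := le_antisymm (by linarith) hpp
          have hq'e : q' = q := le_antisymm hqq (by linarith)
          rw [hp'e, hq'e, ← he]
        · have hβα : ψinv q ≤ ψinv p := arch_lemC hanti hα hβ (by rw [hψα, hψβ]; linarith)
          have hqp : (0:ℝ) < q - p := by linarith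
          have hl0 : 0 ≤ (q - p') / (q - p) := div_nonneg (by linarith) hqp.le
          have hl1 : (q - p') / (q - p) ≤ 1 := by rw [div_le_one hqp]; linarith
          have hm0 : 0 ≤ (q - q') / (q - p) := div_nonneg (by linarith) hqp.le
          have hm1 : (q - q') / (q - p) ≤ 1 := by rw [div_le_one hqp]; linarith
          have hlmu : (q - p') / (q - p) + (q - q') / (q - p) = 1 := by
            field_simp; linarith
          have hmem : ∀ l : ℝ, 0 ≤ l → l ≤ 1 → l * ψinv p + (1 - l) * ψinv q ∈ Ioc (0:ℝ) 1 := by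
            intro l h0 h1
            constructor
            · nlinarith [hα.1, hβ.1]
            · nlinarith [hα.2, hβ.2]
          have hcv1 := hconv.2 hα hβ (show (0:ℝ) ≤ (q - p') / (q - p) from hl0)
            (show (0:ℝ) ≤ 1 - (q - p') / (q - p) by linarith) (by ring)
          have hcv2 := hconv.2 hα hβ (show (0:ℝ) ≤ (q - q') / (q - p) from hm0)
            (show (0:ℝ) ≤ 1 - (q - q') / (q - p) by linarith) (by ring)
          simp only [smul_eq_mul] at hcv1 hcv2
          rw [hψα, hψβ] at hcv1 hcv2
          have hrhs1 : (q - p') / (q - p) * p + (1 - (q - p') / (q - p)) * q = p' := by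
            field_simp; ring
          have hrhs2 : (q - q') / (q - p) * p + (1 - (q - q') / (q - p)) * q = q' := by
            field_simp; ring
          have h1 : ψinv p' ≤ (q - p') / (q - p) * ψinv p + (1 - (q - p') / (q - p)) * ψinv q :=
            arch_lemC hanti (hmem _ hl0 hl1) hα' (by rw [hψα']; linarith [hcv1, hrhs1])
          have h2 : ψinv q' ≤ (q - q') / (q - p) * ψinv p + (1 - (q - q') / (q - p)) * ψinv q :=
            arch_lemC hanti (hmem _ hm0 hm1) hβ' (by rw [hψβ']; linarith [hcv2, hrhs2])
          have e1 : ((q - p') / (q - p) + (q - q') / (q - p)) * ψinv p = 1 * ψinv p := by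
            rw [hlmu]
          have e2 : ((q - p') / (q - p) + (q - q') / (q - p)) * ψinv q = 1 * ψinv q := by
            rw [hlmu]
          linarith [h1, h2, e1, e2]
      · -- q outside the image: q is an upper bound of ψ
        have hq0 : (0:ℝ) ≤ q := by linarith
        have hub := hE q hq0 hqI
        rcases le_or_gt (ψinv p' + ψinv q') 1 with hγ1 | hγ1
        · have hγI : ψinv p' + ψinv q' ∈ Ioc (0:ℝ) 1 := ⟨by linarith [hα'.1, hβ'.1], hγ1⟩
          have hA := arch_lemA hcont hconv hα' hβ' hγ1 hub
          have hpγ : ψ (ψinv p) ≤ ψ (ψinv p' + ψinv q') := by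
            rw [hψα]
            rw [hψα', hψβ'] at hA
            linarith
          have hle : ψinv p' + ψinv q' ≤ ψinv p := arch_lemC hanti hα hγI hpγ
          rw [hinv₃ q hq0 hqI]
          linarith
        · exfalso
          have hγ2 : ψinv p' + ψinv q' - 1 ∈ Ioc (0:ℝ) 1 := ⟨by linarith, by linarith [hα'.2, hβ'.2]⟩
          have h1I : (1:ℝ) ∈ Ioc (0:ℝ) 1 := ⟨one_pos, le_refl 1⟩
          have hB := arch_lemB hconv hγ2 h1I (by linarith [hβ'.2]) hα'.2
            (by linarith [hα'.2]) hβ'.2 (by ring)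
          rw [hψα', hψβ', hψ1] at hB
          have hψγ := hub _ hγ2
          have hq_eq : q = ψ (ψinv p' + ψinv q' - 1) := le_antisymm (by linarith) hψγ
          exact hqI ⟨_, hγ2, hq_eq.symm⟩
    · -- q' outside the image
      rw [hinv₃ q' (by linarith) hq']
      have h1 := hF p p' hp hpp
      have h2 := (hG q (by linarith)).1
      linarith
  have hIoc : ∀ u : ℝ, u ∈ Icc (0:ℝ) 1 → u ≠ 0 → u ∈ Ioc (0:ℝ) 1 :=
    fun u hu hne => ⟨lt_of_le_of_ne hu.1 (Ne.symm hne), hu.2⟩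
  refine ⟨?_, ?_, ?_⟩
  · intro u _
    constructor
    · rw [hC]; simp
    · rw [hC]; simp
  · intro u hu
    by_cases hu0 : u = 0
    · subst hu0
      constructor
      · rw [hC]; simp
      · rw [hC]; simp
    · have huI := hIoc u hu hu0
      have h1 : C u 1 = u := by
        rw [hC, if_neg (by push_neg; exact ⟨hu0, one_ne_zero⟩), hψ1, add_zero]
        exact hinv₁ u huI
      have h2 : C 1 u = u := by
        rw [hC, if_neg (by push_neg; exact ⟨one_ne_zero, hu0⟩), hψ1, zero_add]
        exact hinv₁ u huI
      exact ⟨h1, h2⟩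
  · intro u₁ u₂ v₁ v₂ hu₁ hu₂ hv₁ hv₂ h12 hv12
    have hzero : ∀ u v : ℝ, u = 0 ∨ v = 0 → C u v = 0 := by
      intro u v h; rw [hC, if_pos h]
    have hCnn : ∀ u v : ℝ, u ∈ Icc (0:ℝ) 1 → v ∈ Icc (0:ℝ) 1 → 0 ≤ C u v := by
      intro u v hu hv
      rw [hC]
      split
      · exact le_refl 0
      · next h =>
        push_neg at h
        exact (hG _ (add_nonneg (hψnn u (hIoc u hu h.1)) (hψnn v (hIoc v hv h.2)))).1
    by_cases hu10 : u₁ = 0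
    · rw [hzero u₁ v₁ (Or.inl hu10), hzero u₁ v₂ (Or.inl hu10)]
      by_cases hu20 : u₂ = 0
      · rw [hzero u₂ v₁ (Or.inl hu20), hzero u₂ v₂ (Or.inl hu20)]; norm_num
      · by_cases hv10 : v₁ = 0
        · rw [hzero u₂ v₁ (Or.inr hv10)]
          have := hCnn u₂ v₂ hu₂ hv₂
          linarith
        · have hv20 : v₂ ≠ 0 := by
            intro h; exact hv10 (le_antisymm (h ▸ hv12) hv₁.1)
          have hu2I := hIoc u₂ hu₂ hu20
          have hv1I := hIoc v₁ hv₁ hv10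
          have hv2I := hIoc v₂ hv₂ hv20
          have e1 : C u₂ v₁ = ψinv (ψ u₂ + ψ v₁) := by
            rw [hC]; exact if_neg (by push_neg; exact ⟨hu20, hv10⟩)
          have e2 : C u₂ v₂ = ψinv (ψ u₂ + ψ v₂) := by
            rw [hC]; exact if_neg (by push_neg; exact ⟨hu20, hv20⟩)
          rw [e1, e2]
          have hψv : ψ v₂ ≤ ψ v₁ := hanti.antitoneOn hv1I hv2I hv12
          have := hF (ψ u₂ + ψ v₂) (ψ u₂ + ψ v₁)
            (add_nonneg (hψnn _ hu2I) (hψnn _ hv2I)) (by linarith)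
          linarith
    · have hu20 : u₂ ≠ 0 := by
        intro h; exact hu10 (le_antisymm (h ▸ h12) hu₁.1)
      by_cases hv10 : v₁ = 0
      · rw [hzero u₂ v₁ (Or.inr hv10), hzero u₁ v₁ (Or.inr hv10)]
        by_cases hv20 : v₂ = 0
        · rw [hzero u₂ v₂ (Or.inr hv20), hzero u₁ v₂ (Or.inr hv20)]; norm_num
        · have hu1I := hIoc u₁ hu₁ hu10
          have hu2I := hIoc u₂ hu₂ hu20
          have hv2I := hIoc v₂ hv₂ hv20
          have e1 : C u₁ v₂ = ψinv (ψ u₁ + ψ v₂) := by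
            rw [hC]; exact if_neg (by push_neg; exact ⟨hu10, hv20⟩)
          have e2 : C u₂ v₂ = ψinv (ψ u₂ + ψ v₂) := by
            rw [hC]; exact if_neg (by push_neg; exact ⟨hu20, hv20⟩)
          rw [e1, e2]
          have hψu : ψ u₂ ≤ ψ u₁ := hanti.antitoneOn hu1I hu2I h12
          have := hF (ψ u₂ + ψ v₂) (ψ u₁ + ψ v₂)
            (add_nonneg (hψnn _ hu2I) (hψnn _ hv2I)) (by linarith)
          linarith
      · have hv20 : v₂ ≠ 0 := by
          intro h; exact hv10 (le_antisymm (h ▸ hv12) hv₁.1)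
        have hu1I := hIoc u₁ hu₁ hu10
        have hu2I := hIoc u₂ hu₂ hu20
        have hv1I := hIoc v₁ hv₁ hv10
        have hv2I := hIoc v₂ hv₂ hv20
        have e22 : C u₂ v₂ = ψinv (ψ u₂ + ψ v₂) := by
          rw [hC]; exact if_neg (by push_neg; exact ⟨hu20, hv20⟩)
        have e21 : C u₂ v₁ = ψinv (ψ u₂ + ψ v₁) := by
          rw [hC]; exact if_neg (by push_neg; exact ⟨hu20, hv10⟩)
        have e12 : C u₁ v₂ = ψinv (ψ u₁ + ψ v₂) := by
          rw [hC]; exact if_neg (by push_neg; exact ⟨hu10, hv20⟩)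
        have e11 : C u₁ v₁ = ψinv (ψ u₁ + ψ v₁) := by
          rw [hC]; exact if_neg (by push_neg; exact ⟨hu10, hv10⟩)
        rw [e22, e21, e12, e11]
        have hψu : ψ u₂ ≤ ψ u₁ := hanti.antitoneOn hu1I hu2I h12
        have hψv : ψ v₂ ≤ ψ v₁ := hanti.antitoneOn hv1I hv2I hv12
        have ha := hψnn _ hu2I
        have hb := hψnn _ hu1I
        have hc := hψnn _ hv2I
        have hd := hψnn _ hv1I
        rcases le_total (ψ u₂ + ψ v₁) (ψ u₁ + ψ v₂) with hcmp | hcmp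
        · have := hkey (ψ u₂ + ψ v₂) (ψ u₂ + ψ v₁) (ψ u₁ + ψ v₂) (ψ u₁ + ψ v₁)
            (by linarith) (by linarith) hcmp (by linarith) (by ring)
          linarith
        · have := hkey (ψ u₂ + ψ v₂) (ψ u₁ + ψ v₂) (ψ u₂ + ψ v₁) (ψ u₁ + ψ v₁)
            (by linarith) (by linarith) hcmp (by linarith) (by ring)
          linarith
end
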